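/- For all complex s on the critical line, i.e. s = 1/2 + it with t real, the absolute value of Z_1(s) equals the absolute value of Z'(t), where Z is Hardy's Z-function. -/

import Mathlib

open Complex Real

/-- The factor `χ(s) = 2^s π^(s-1) sin(πs/2) Γ(1-s)` from the functional equation of `ζ`. -/
noncomputable def chi (s : ℂ) : ℂ :=
  2 ^ s * (π : ℂ) ^ (s - 1) * Complex.sin (π * s / 2) * Complex.Gamma (1 - s)

/-- `Z₁(s) = ζ'(s) - (1/2)(χ'/χ)(s) ζ(s)`. -/
noncomputable def Z1 (s : ℂ) : ℂ :=
  deriv riemannZeta s - (1 / 2) * (deriv chi s / chi s) * riemannZeta s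

theorem stmt0 (θ : ℝ → ℝ) (Z : ℝ → ℂ)
    (hθ : Differentiable ℝ θ)
    (hχθ : ∀ t : ℝ, chi (1 / 2 + t * I) = Complex.exp (-(2 * I * θ t)))
    (hZ : ∀ t : ℝ, Z t = Complex.exp (I * θ t) * riemannZeta (1 / 2 + t * I)) :
    ∀ t : ℝ, ‖Z1 (1 / 2 + t * I)‖ = ‖deriv Z t‖ := by
  intro t
  set s : ℂ := 1 / 2 + t * I with hs
  have hsre : s.re = 1 / 2 := by simp [hs]
  have hs1 : s ≠ 1 := by
    intro h
    have := congrArg Complex.re h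
    rw [hsre] at this
    norm_num at this
  have hζ : DifferentiableAt ℂ riemannZeta s := differentiableAt_riemannZeta hs1
  have hΓarg : ∀ m : ℕ, (1 - s) ≠ -m := by
    intro m h
    have := congrArg Complex.re h
    simp [Complex.sub_re, hsre] at this
    norm_num at this
    have : (0:ℝ) ≤ m := Nat.cast_nonneg m
    linarith
  have hχ : DifferentiableAt ℂ chi s := by
    have h1 : DifferentiableAt ℂ (fun z : ℂ => (2 : ℂ) ^ z) s :=
      differentiableAt_id.const_cpow (Or.inl two_ne_zero)
    have h2 : DifferentiableAt ℂ (fun z : ℂ => (π : ℂ) ^ (z - 1)) s :=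
      (differentiableAt_id.sub_const 1).const_cpow
        (Or.inl (Complex.ofReal_ne_zero.mpr Real.pi_ne_zero))
    have h3 : DifferentiableAt ℂ (fun z : ℂ => Complex.sin (π * z / 2)) s :=
      ((differentiableAt_id.const_mul (π : ℂ)).div_const 2).csin
    have h4 : DifferentiableAt ℂ (fun z : ℂ => Complex.Gamma (1 - z)) s :=
      (Complex.differentiableAt_Gamma _ hΓarg).comp s
        ((differentiableAt_const 1).sub differentiableAt_id)
    exact ((h1.mul h2).mul h3).mul h4
  -- derivative of the path
  have hg : HasDerivAt (fun u : ℝ => (1 / 2 : ℂ) + u * I) I t := by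
    have h0 : HasDerivAt (fun u : ℝ => (u : ℂ)) 1 t := by
      simpa using (hasDerivAt_id t).ofReal_comp
    simpa using (h0.mul_const I).const_add (1 / 2 : ℂ)
  set d : ℝ := deriv θ t with hd
  have hθc : HasDerivAt (fun u : ℝ => ((θ u : ℝ) : ℂ)) (d : ℂ) t :=
    ((hθ t).hasDerivAt.ofReal_comp)
  -- derivative of chi along the line
  have hχline : HasDerivAt (fun u : ℝ => chi (1 / 2 + u * I)) (I * deriv chi s) t := by
    have := HasDerivAt.scomp (g₁ := chi) t (hχ.hasDerivAt) hg
    exact this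
  -- derivative of the exponential side
  have hEline : HasDerivAt (fun u : ℝ => Complex.exp (-(2 * I * θ u)))
      (Complex.exp (-(2 * I * θ t)) * (-(2 * I * d))) t := by
    have h1 : HasDerivAt (fun u : ℝ => -(2 * I * (θ u : ℂ))) (-(2 * I * d)) t :=
      (hθc.const_mul (2 * I)).neg
    exact h1.cexp
  have hfun : (fun u : ℝ => chi (1 / 2 + u * I)) =
      (fun u : ℝ => Complex.exp (-(2 * I * θ u))) := funext hχθ
  have huniq : I * deriv chi s = Complex.exp (-(2 * I * θ t)) * (-(2 * I * d)) := by
    rw [hfun] at hχline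
    exact hχline.unique hEline
  have hχs : chi s = Complex.exp (-(2 * I * θ t)) := hχθ t
  have hχs0 : chi s ≠ 0 := by rw [hχs]; exact Complex.exp_ne_zero _
  have hderχ : deriv chi s = -2 * d * chi s := by
    have hI : (I : ℂ) ≠ 0 := Complex.I_ne_zero
    rw [← hχs] at huniq
    have h2 : I * deriv chi s = I * (-2 * d * chi s) := by rw [huniq]; ring
    exact mul_left_cancel₀ hI h2
  have hratio : deriv chi s / chi s = -2 * d := by
    rw [hderχ]; field_simp
  have hZ1 : Z1 s = deriv riemannZeta s + d * riemannZeta s := by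
    rw [Z1, hratio]; ring
  -- derivative of Z
  have hE2 : HasDerivAt (fun u : ℝ => Complex.exp (I * θ u))
      (Complex.exp (I * θ t) * (I * d)) t := (hθc.const_mul I).cexp
  have hζline : HasDerivAt (fun u : ℝ => riemannZeta (1 / 2 + u * I))
      (I * deriv riemannZeta s) t := by
    have := HasDerivAt.scomp (g₁ := riemannZeta) t (hζ.hasDerivAt) hg
    exact this
  have hZder : HasDerivAt Z
      (Complex.exp (I * θ t) * (I * d) * riemannZeta s +
        Complex.exp (I * θ t) * (I * deriv riemannZeta s)) t := by
    have := hE2.mul hζline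
    have hfun2 : Z = fun u : ℝ => Complex.exp (I * θ u) * riemannZeta (1 / 2 + u * I) :=
      funext hZ
    rw [hfun2]
    exact this
  have hZd : deriv Z t = I * Complex.exp (I * θ t) * Z1 s := by
    rw [hZder.deriv, hZ1]; ring
  rw [hZd]
  simp [map_mul, Complex.norm_exp]
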